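/- For all reals K ≥ 1 and ρ > 1, it holds that ρ^{1+1/K}/(ρ−1) ≥ (1+K)^{1+1/K}/K, where z^{1+1/K} denotes the real power of the positive real z. In particular, over ρ > 1 the function ρ ↦ ρ^{1+1/K}/(ρ−1) attains its minimum value (1+K)^{1+1/K}/K at ρ = 1+K. -/

import Mathlib

/-- for `K ≥ 1`, the function `ρ ↦ ρ^(1+1/K) / (ρ - 1)` on `ρ > 1`
is minimized at `ρ = 1 + K`, with minimum value `(1+K)^(1+1/K) / K`. -/
theorem rpow_ratio_min (K ρ : ℝ) (hK : 1 ≤ K) (hρ : 1 < ρ) :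
    ρ ^ (1 + 1 / K) / (ρ - 1) ≥ (1 + K) ^ (1 + 1 / K) / K := by
  have hK0 : (0:ℝ) < K := by linarith
  set p : ℝ := 1 + 1 / K with hp
  have hp1 : 1 ≤ p := by
    have : 0 < 1 / K := by positivity
    simp [hp]; linarith
  have hA : (0:ℝ) < 1 + K := by linarith
  set s : ℝ := ρ / (1 + K) - 1 with hs
  have hs1 : -1 ≤ s := by
    have : 0 < ρ / (1 + K) := by positivity
    simp [hs]; linarith
  have hber : 1 + p * s ≤ (1 + s) ^ p := one_add_mul_self_le_rpow_one_add hs1 hp1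
  have h1s : 1 + s = ρ / (1 + K) := by simp [hs]
  have hdiv : (1 + s) ^ p = ρ ^ p / (1 + K) ^ p := by
    rw [h1s, Real.div_rpow (by linarith) hA.le]
  have hApos : (0:ℝ) < (1 + K) ^ p := Real.rpow_pos_of_pos hA _
  -- multiply Bernoulli by (1+K)^p
  have key : (1 + K) ^ p * (1 + p * s) ≤ ρ ^ p := by
    have := mul_le_mul_of_nonneg_left hber hApos.le
    rwa [hdiv, mul_div_cancel₀ _ (ne_of_gt hApos)] at this
  have hKp : K * p = K + 1 := by rw [hp, mul_add, mul_one, mul_one_div_cancel hK0.ne']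
  have hident : K * (1 + p * s) = ρ - 1 := by
    have : K * (1 + p * s) = K + (K * p) * s := by ring
    rw [this, hKp, hs]
    field_simp
    ring
  rw [ge_iff_le, div_le_div_iff₀ hK0 (by linarith)]
  calc (1 + K) ^ p * (ρ - 1) = (1 + K) ^ p * (K * (1 + p * s)) := by rw [hident]
    _ = ((1 + K) ^ p * (1 + p * s)) * K := by ring
    _ ≤ ρ ^ p * K := by
        apply mul_le_mul_of_nonneg_right key hK0.le
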